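/- Let ε ∈ (0,1], δ ∈ (0,1), and Thresh ≥ 12·ln(24/δ)/ε². Then the geometric-type sum ∑_{j=0}^∞ 2·exp(−ε²·Thresh·2^{j}/12) is at most 4·exp(−ε²·Thresh/12), which is at most δ/6. -/

import Mathlib

open Real

theorem geometric_tail_sum_bound
    (eps delta T : ℝ) (heps0 : 0 < eps) (heps1 : eps ≤ 1)
    (hdelta0 : 0 < delta) (hdelta1 : delta < 1)
    (hT : T ≥ 12 * Real.log (24 / delta) / eps ^ 2) :
    (∑' j : ℕ, 2 * Real.exp (-(eps ^ 2 * T * 2 ^ j / 12)))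
        ≤ 4 * Real.exp (-(eps ^ 2 * T / 12))
    ∧ 4 * Real.exp (-(eps ^ 2 * T / 12)) ≤ delta / 6 := by
  set a := eps ^ 2 * T / 12 with ha_def
  have hepssq : 0 < eps ^ 2 := by positivity
  have hlog : Real.log (24 / delta) ≤ a := by
    rw [ge_iff_le, div_le_iff₀ hepssq] at hT
    rw [ha_def]; nlinarith
  have h24 : (24:ℝ) ≤ 24 / delta := by
    rw [le_div_iff₀ hdelta0]; nlinarith
  have hexp3 : Real.exp 3 < 24 := by
    have h1 := Real.exp_one_lt_d9
    have h2 := Real.exp_pos 1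
    rw [show (3:ℝ) = 1 + 1 + 1 by norm_num, Real.exp_add, Real.exp_add]
    nlinarith
  have h3log : (3:ℝ) ≤ Real.log 24 := by
    rw [Real.le_log_iff_exp_le (by norm_num)]
    exact hexp3.le
  have ha3 : (3:ℝ) ≤ a := by
    calc (3:ℝ) ≤ Real.log 24 := h3log
    _ ≤ Real.log (24 / delta) := Real.log_le_log (by norm_num) h24
    _ ≤ a := hlog
  have ha0 : 0 < a := by linarith
  set r := Real.exp (-a) with hr_def
  have hr0 : 0 < r := Real.exp_pos _
  have hr_half : r ≤ 1 / 2 := by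
    have : Real.exp (-a) ≤ Real.exp (-3) := Real.exp_le_exp.2 (by linarith)
    have h2 : Real.exp (-3) < 1 / 2 := by
      rw [Real.exp_neg]
      rw [inv_lt_comm₀ (Real.exp_pos 3) (by norm_num)]
      calc (1/2 : ℝ)⁻¹ = 2 := by norm_num
      _ < Real.exp 3 := by nlinarith [Real.exp_pos 3, Real.add_one_le_exp (3:ℝ)]
    linarith
  have hr1 : r < 1 := by linarith
  have key : ∀ j : ℕ, 2 * Real.exp (-(eps ^ 2 * T * 2 ^ j / 12)) ≤ 2 * r * r ^ j := by
    intro j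
    have h2 : (j:ℝ) + 1 ≤ 2 ^ j := by
      have := Nat.lt_two_pow_self (n := j)
      have : j + 1 ≤ 2 ^ j := this
      exact_mod_cast this
    have heq : eps ^ 2 * T * 2 ^ j / 12 = a * 2 ^ j := by rw [ha_def]; ring
    have hle : a * ((j:ℝ) + 1) ≤ a * 2 ^ j := by nlinarith
    calc 2 * Real.exp (-(eps ^ 2 * T * 2 ^ j / 12))
        = 2 * Real.exp (-(a * 2 ^ j)) := by rw [heq]
      _ ≤ 2 * Real.exp (-(a * ((j:ℝ) + 1))) := by
          have := Real.exp_le_exp.2 (neg_le_neg hle)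
          linarith
      _ = 2 * r * r ^ j := by
          rw [hr_def, show -(a * ((j:ℝ) + 1)) = -a + (j:ℝ) * (-a) by ring,
            Real.exp_add, Real.exp_nat_mul]
          ring
  have hsum_geo : Summable (fun j : ℕ => 2 * r * r ^ j) :=
    (summable_geometric_of_lt_one hr0.le hr1).mul_left _
  have hsum_f : Summable (fun j : ℕ => 2 * Real.exp (-(eps ^ 2 * T * 2 ^ j / 12))) := by
    apply Summable.of_nonneg_of_le (fun j => by positivity) key hsum_geo
  have htsum_geo : (∑' j : ℕ, 2 * r * r ^ j) = 2 * r * (1 - r)⁻¹ := by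
    rw [tsum_mul_left, tsum_geometric_of_lt_one hr0.le hr1]
  constructor
  · calc (∑' j : ℕ, 2 * Real.exp (-(eps ^ 2 * T * 2 ^ j / 12)))
        ≤ ∑' j : ℕ, 2 * r * r ^ j := Summable.tsum_le_tsum key hsum_f hsum_geo
      _ = 2 * r * (1 - r)⁻¹ := htsum_geo
      _ ≤ 4 * r := by
          have h1r : (1:ℝ) / 2 ≤ 1 - r := by linarith
          have : (1 - r)⁻¹ ≤ 2 := by
            rw [inv_le_comm₀ (by linarith) (by norm_num)]
            linarith
          nlinarith
  · have h1 : r ≤ delta / 24 := by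
      have h2 : Real.exp (-a) ≤ Real.exp (-(Real.log (24 / delta))) :=
        Real.exp_le_exp.2 (by linarith)
      rw [Real.exp_neg (Real.log (24 / delta)), Real.exp_log (by positivity)] at h2
      calc r ≤ (24 / delta)⁻¹ := h2
        _ = delta / 24 := by field_simp
    linarith
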